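/- arXiv:1006.1941 — 4 statements merged into one kernel-verified Lean document; each statement's English description precedes it below -/
import Mathlib

section
/- For bounded linear operators A, B on a complex Hilbert space H and t > 0, equality holds in |A - B|² ≤ (1+t)|A|² + (1 + 1/t)|B|² if and only if tA + B = 0. -/
variable {H : Type*} [NormedAddCommGroup H] [InnerProductSpace ℂ H] [CompleteSpace H]

/-- The absolute value `|A| = (A*A)^{1/2}` of a bounded operator. -/
noncomputable def opAbs (A : H →L[ℂ] H) : H →L[ℂ] H := CFC.sqrt (star A * A)

/-- `A = U|A|` is the (canonical) polar decomposition of `A`: `U` is a partial isometry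
whose kernel equals the kernel of `A` (so that `U*U` is the projection onto `(ker A)ᗮ`). -/
def IsPolarDecomp (A U : H →L[ℂ] H) : Prop :=
  A = U * opAbs A ∧ U * star U * U = U ∧ LinearMap.ker (U : H →ₗ[ℂ] H) = LinearMap.ker (A : H →ₗ[ℂ] H)

set_option synthInstance.maxHeartbeats 400000 in
theorem opAbs_sub_sq_eq_iff (A B : H →L[ℂ] H) (t : ℝ) (ht : 0 < t) :
    opAbs (A - B) ^ 2 = (1 + t) • opAbs A ^ 2 + (1 + 1 / t) • opAbs B ^ 2 ↔
      t • A + B = 0 := by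
  have h1 : ∀ C : H →L[ℂ] H, opAbs C ^ 2 = star C * C := fun C =>
    CFC.sq_sqrt (star C * C) (star_mul_self_nonneg C)
  rw [h1, h1, h1, ← CStarRing.star_mul_self_eq_zero_iff (t • A + B)]
  have key : star (t • A + B) * (t • A + B)
      = t • ((1 + t) • (star A * A) + (1 + 1 / t) • (star B * B)
          - star (A - B) * (A - B)) := by
    simp only [star_add, star_smul, star_sub, star_trivial, add_mul, mul_add, sub_mul,
      mul_sub, smul_mul_assoc, mul_smul_comm, smul_add, smul_sub, smul_smul]
    match_scalars <;> field_simp <;> ring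
  rw [key]
  constructor
  · intro h
    rw [h, sub_self, smul_zero]
  · intro h
    rcases smul_eq_zero.mp h with h0 | h0
    · exact absurd h0 ht.ne'
    · exact (sub_eq_zero.mp h0).symm
end

section
/- Let A, B be bounded operators on a Hilbert space such that |A| and |B| are invertible, let r > 1 and s satisfy 1/r + 1/s = 1, and let p be a real number. Then |A|A|^{p−1} − B|B|^{p−1}|² ≤ |A|^{p−1}( r|A−B|² + s·||B|^p|A|^{1−p} − |B||² )|A|^{p−1} in the Loewner order. -/
variable {H : Type*} [NormedAddCommGroup H] [InnerProductSpace ℂ H] [CompleteSpace H]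

set_option maxHeartbeats 1000000 in
set_option synthInstance.maxHeartbeats 400000 in
theorem p_angular_distance_estimate (A B : H →L[ℂ] H)
    (hA : IsUnit (opAbs A)) (hB : IsUnit (opAbs B))
    (r s : ℝ) (hr : 1 < r) (hrs : 1 / r + 1 / s = 1) (p : ℝ) :
    opAbs (A * CFC.rpow (opAbs A) (p - 1) - B * CFC.rpow (opAbs B) (p - 1)) ^ 2
      ≤ CFC.rpow (opAbs A) (p - 1)
          * (r • opAbs (A - B) ^ 2
             + s • opAbs (CFC.rpow (opAbs B) p * CFC.rpow (opAbs A) (1 - p) - opAbs B) ^ 2)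
          * CFC.rpow (opAbs A) (p - 1) := by
  set a := opAbs A with ha_def
  set b := opAbs B with hb_def
  have ha0 : (0 : H →L[ℂ] H) ≤ a := CFC.sqrt_nonneg _
  have hb0 : (0 : H →L[ℂ] H) ≤ b := CFC.sqrt_nonneg _
  have haS : 0 ∉ spectrum NNReal a := spectrum.zero_notMem NNReal hA
  have hbS : 0 ∉ spectrum NNReal b := spectrum.zero_notMem NNReal hB
  set K := CFC.rpow a (p - 1) with hK_def
  set C := A - B with hC_def
  set E := CFC.rpow b p * CFC.rpow a (1 - p) - b with hE_def
  set D := -(B * CFC.rpow b (-1) * E) with hD_def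
  -- basic rpow facts
  have h1 : CFC.rpow a (1 - p) * K = 1 := by
    rw [hK_def]
    simp only [CFC.rpow_eq_pow]
    rw [← CFC.rpow_add hA, show (1 - p) + (p - 1) = 0 by ring]
    exact CFC.rpow_zero a ha0
  have h2 : CFC.rpow b (-1) * CFC.rpow b p = CFC.rpow b (p - 1) := by
    simp only [CFC.rpow_eq_pow]
    rw [← CFC.rpow_add hB, show (-1 : ℝ) + p = p - 1 by ring]
  have h3 : CFC.rpow b (-1) * b = 1 := by
    have := CFC.rpow_neg_mul_rpow 1 (IsStrictlyPositive.iff_of_unital.mpr ⟨hb0, hB⟩)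
    rwa [CFC.rpow_one b hb0] at this
  have h3' : b * CFC.rpow b (-1) = 1 := by
    have := CFC.rpow_mul_rpow_neg 1 (IsStrictlyPositive.iff_of_unital.mpr ⟨hb0, hB⟩)
    rwa [CFC.rpow_one b hb0] at this
  have h3K : ∀ X : H →L[ℂ] H, CFC.rpow b (-1) * (b * X) = X := fun X => by
    rw [← mul_assoc, h3, one_mul]
  have habsX : ∀ X : H →L[ℂ] H, opAbs X ^ 2 = star X * X := fun X =>
    CFC.sq_sqrt _ (star_mul_self_nonneg X)
  have hBB : star B * B = b * b := (CFC.sqrt_mul_sqrt_self _ (star_mul_self_nonneg B)).symm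
  -- identity 1 : A|A|^{p-1} - B|B|^{p-1} = (C + D) K
  have hDK : D * K = B * K - B * CFC.rpow b (p - 1) := by
    have hEK : E * K = CFC.rpow b p - b * K := by
      rw [hE_def, sub_mul, mul_assoc, h1, mul_one]
    rw [hD_def, neg_mul, mul_assoc, hEK, mul_sub]
    simp only [mul_assoc]
    rw [h3K, h2]
    abel
  have hid : A * K - B * CFC.rpow b (p - 1) = (C + D) * K := by
    rw [add_mul, hDK, hC_def, sub_mul]
    abel
  -- identity 2 : star D * D = star E * E
  have hsb : star (CFC.rpow b (-1)) = CFC.rpow b (-1) :=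
    (IsSelfAdjoint.of_nonneg CFC.rpow_nonneg)
  have hDD : star D * D = star E * E := by
    rw [hD_def, star_neg, neg_mul_neg, star_mul, star_mul, hsb]
    calc star E * CFC.rpow b (-1) * star B * (B * CFC.rpow b (-1) * E)
        = star E * (CFC.rpow b (-1) * (star B * B) * CFC.rpow b (-1)) * E := by
          simp only [mul_assoc]
      _ = star E * E := by
          rw [hBB, ← mul_assoc (CFC.rpow b (-1)) b b, h3, one_mul, h3', mul_one]
  -- scalar arithmetic
  have hr1 : (0 : ℝ) < r - 1 := by linarith
  have hr0 : r ≠ 0 := by linarith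
  have hs0 : s ≠ 0 := by
    intro h
    rw [h, div_zero, add_zero] at hrs
    have : r = 1 := by field_simp at hrs; linarith
    linarith
  have hs1 : (s - 1) * (r - 1) = 1 := by
    field_simp at hrs
    nlinarith [hrs]
  set t := Real.sqrt (r - 1) with ht_def
  have ht : t ≠ 0 := ne_of_gt (Real.sqrt_pos.mpr hr1)
  have ht2 : t * t = r - 1 := Real.mul_self_sqrt hr1.le
  have hti : t⁻¹ * t⁻¹ = s - 1 := by
    rw [← mul_inv, ht2, ← (eq_inv_of_mul_eq_one_left hs1)]
  -- the key operator inequality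
  set F := t • C - t⁻¹ • D with hF_def
  have hF : star F * F = (r - 1) • (star C * C) - star C * D - star D * C
      + (s - 1) • (star D * D) := by
    rw [← ht2, ← hti, hF_def]
    simp only [star_sub, star_smul, star_trivial, sub_mul, mul_sub, smul_mul_assoc,
      mul_smul_comm, smul_smul, mul_inv_cancel₀ ht, inv_mul_cancel₀ ht, one_smul]
    match_scalars <;> field_simp
  have hkey : star (C + D) * (C + D) ≤ r • (star C * C) + s • (star D * D) := by
    rw [← sub_nonneg]
    have hexp : r • (star C * C) + s • (star D * D) - star (C + D) * (C + D)
        = star F * F := by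
      rw [hF, star_add, add_mul, mul_add, mul_add]
      module
    rw [hexp]
    exact star_mul_self_nonneg F
  -- conjugation and conclusion
  have hKsa : star K = K := (IsSelfAdjoint.of_nonneg CFC.rpow_nonneg)
  calc opAbs (A * K - B * CFC.rpow b (p - 1)) ^ 2
      = star ((C + D) * K) * ((C + D) * K) := by rw [habsX, hid]
    _ = star K * (star (C + D) * (C + D)) * K := by
        rw [star_mul]; simp only [mul_assoc]
    _ ≤ star K * (r • (star C * C) + s • (star D * D)) * K :=
        star_left_conjugate_le_conjugate hkey K
    _ = K * (r • opAbs C ^ 2 + s • opAbs E ^ 2) * K := by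
        rw [hKsa, habsX C, habsX E, hDD]
end

section
/- Let A, B be bounded operators on a Hilbert space with |A|, |B| invertible, 1/r + 1/s = 1 with r > 1, p ∈ ℝ, and suppose (r−1)(A−B)|A|^{p−1} = B(|A|^{p−1} − |B|^{p−1}). Then |B| ≤ ( (1/r)|A|^{1−p}|B|^{2p}|A|^{1−p} + (1/s)|A|² )^{1/2}. -/
set_option synthInstance.maxHeartbeats 400000
set_option maxHeartbeats 1000000

variable {H : Type*} [NormedAddCommGroup H] [InnerProductSpace ℂ H] [CompleteSpace H]

section Aux

open scoped NNReal

variable {A : Type*} [CStarAlgebra A] [PartialOrder A] [StarOrderedRing A]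

omit [PartialOrder A] [StarOrderedRing A] in
lemma mySpectralRadius_mul_comm (x y : A) :
    spectralRadius ℂ (x * y) = spectralRadius ℂ (y * x) := by
  have key : ∀ c d : A, spectralRadius ℂ (c * d) ≤ spectralRadius ℂ (d * c) := by
    intro c d
    rw [spectralRadius, spectralRadius]
    refine iSup₂_le fun k hk => ?_
    rcases eq_or_ne k 0 with rfl | h0
    · simp
    · have hk' : k ∈ spectrum ℂ (d * c) := by
        have hmem : k ∈ spectrum ℂ (c * d) \ {0} := ⟨hk, h0⟩
        rw [spectrum.nonzero_mul_comm] at hmem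
        exact hmem.1
      exact le_iSup₂ (f := fun k (_ : k ∈ spectrum ℂ (d * c)) => (‖k‖₊ : ENNReal)) k hk'
  exact le_antisymm (key x y) (key y x)

lemma myIsUnit_sqrt {b : A} (hb : 0 ≤ b) (hbu : IsUnit b) : IsUnit (CFC.sqrt b) := by
  have h0b : (0 : ℝ≥0) ∉ spectrum ℝ≥0 b := by
    rw [spectrum.zero_notMem_iff]; exact hbu
  have h1 : b ^ ((1:ℝ)/2) * b ^ (-(1/2) : ℝ) = 1 := by
    rw [← CFC.rpow_add hbu, show ((1:ℝ)/2 + -(1/2) : ℝ) = 0 by norm_num, CFC.rpow_zero b hb]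
  have h2 : b ^ (-(1/2) : ℝ) * b ^ ((1:ℝ)/2) = 1 := by
    rw [← CFC.rpow_add hbu, show (-(1/2) + (1:ℝ)/2 : ℝ) = 0 by norm_num, CFC.rpow_zero b hb]
  refine ⟨⟨b ^ ((1:ℝ)/2), b ^ (-(1/2) : ℝ), h1, h2⟩, ?_⟩
  rw [CFC.sqrt_eq_rpow]

/-- Löwner–Heinz for the square root (invertible case). -/
lemma mySqrt_le_sqrt {a b : A} (ha : 0 ≤ a) (hb : 0 ≤ b) (hbu : IsUnit b) (hab : a ≤ b) :
    CFC.sqrt a ≤ CFC.sqrt b := by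
  nontriviality A
  have h0b : (0 : ℝ≥0) ∉ spectrum ℝ≥0 b := by
    rw [spectrum.zero_notMem_iff]; exact hbu
  have h1 : ‖CFC.sqrt a * b ^ (-(1 / 2) : ℝ)‖ ≤ 1 :=
    (le_iff_norm_sqrt_mul_rpow a b ha (IsStrictlyPositive.iff_of_unital.mpr ⟨hb, hbu⟩)).mp hab
  have hsbu : IsUnit (CFC.sqrt b) := myIsUnit_sqrt hb hbu
  rw [le_iff_norm_sqrt_mul_rpow _ _ (CFC.sqrt_nonneg _)
    (IsStrictlyPositive.iff_of_unital.mpr ⟨CFC.sqrt_nonneg _, hsbu⟩)]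
  set w := CFC.sqrt (CFC.sqrt a) with hwdef
  set z := (CFC.sqrt b) ^ (-(1 / 2) : ℝ) with hzdef
  have hw : 0 ≤ w := CFC.sqrt_nonneg _
  have hz : 0 ≤ z := CFC.rpow_nonneg
  have hzz : z * z = b ^ (-(1 / 2) : ℝ) := by
    have hz4 : z = b ^ (-(1/4) : ℝ) := by
      rw [hzdef, CFC.sqrt_eq_rpow, CFC.rpow_rpow b _ _ (by norm_num) (IsStrictlyPositive.iff_of_unital.mpr ⟨hb, hbu⟩)]
      norm_num
    rw [hz4, ← CFC.rpow_add hbu]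
    norm_num
  have hww : w * w = CFC.sqrt a := CFC.sqrt_mul_sqrt_self _ (CFC.sqrt_nonneg _)
  have hsz : IsSelfAdjoint z := IsSelfAdjoint.of_nonneg hz
  have hsw : IsSelfAdjoint w := IsSelfAdjoint.of_nonneg hw
  have hnorm : ‖w * z‖ ^ 2 = ‖z * (CFC.sqrt a * z)‖ := by
    rw [sq, ← CStarRing.norm_star_mul_self, star_mul, hsz.star_eq, hsw.star_eq]
    congr 1
    rw [← hww]
    noncomm_ring
  have hpos : 0 ≤ z * (CFC.sqrt a * z) := by
    have := star_left_conjugate_nonneg (CFC.sqrt_nonneg (a := a)) z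
    rwa [hsz.star_eq, mul_assoc] at this
  have hradius : (‖z * (CFC.sqrt a * z)‖₊ : ENNReal) ≤ 1 := by
    rw [← (IsSelfAdjoint.of_nonneg hpos).spectralRadius_eq_nnnorm]
    calc spectralRadius ℂ (z * (CFC.sqrt a * z)) = spectralRadius ℂ ((CFC.sqrt a * z) * z) :=
          mySpectralRadius_mul_comm _ _
      _ = spectralRadius ℂ (CFC.sqrt a * b ^ (-(1 / 2) : ℝ)) := by rw [mul_assoc, hzz]
      _ ≤ ‖CFC.sqrt a * b ^ (-(1 / 2) : ℝ)‖₊ := spectrum.spectralRadius_le_nnnorm _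
      _ ≤ 1 := by
          rw [ENNReal.coe_le_one_iff]
          exact_mod_cast h1
  have hfin : ‖w * z‖ ^ 2 ≤ 1 := by
    rw [hnorm]
    have := ENNReal.coe_le_one_iff.mp hradius
    exact_mod_cast this
  nlinarith [norm_nonneg (w * z)]

lemma mySmul_nonneg {c : ℝ} (hc : 0 ≤ c) {a : A} (ha : 0 ≤ a) : 0 ≤ c • a := by
  have h := star_mul_self_nonneg (Real.sqrt c • CFC.sqrt a)
  rwa [star_smul, star_trivial, (IsSelfAdjoint.of_nonneg (CFC.sqrt_nonneg (a := a))).star_eq,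
    smul_mul_assoc, mul_smul_comm, smul_smul, Real.mul_self_sqrt hc,
    CFC.sqrt_mul_sqrt_self a ha] at h

/-- Operator convexity of the square. -/
lemma myConvex_sq (x y : A) (t : ℝ) (ht : 0 ≤ t) (ht1 : t ≤ 1) :
    star (t • x + (1 - t) • y) * (t • x + (1 - t) • y)
      ≤ t • (star x * x) + (1 - t) • (star y * y) := by
  have key : t • (star x * x) + (1 - t) • (star y * y)
      - star (t • x + (1 - t) • y) * (t • x + (1 - t) • y)
      = (t * (1 - t)) • (star (x - y) * (x - y)) := by
    simp only [star_add, star_smul, star_sub, star_trivial, add_mul, mul_add, sub_mul, mul_sub,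
      smul_mul_assoc, mul_smul_comm, smul_smul, smul_sub, smul_add]
    module
  have hnn : 0 ≤ (t * (1 - t)) • (star (x - y) * (x - y)) :=
    mySmul_nonneg (by nlinarith) (star_mul_self_nonneg _)
  have h2 := hnn.trans_eq key.symm
  exact sub_nonneg.mp h2

end Aux

theorem equality_consequence_two (A B : H →L[ℂ] H)
    (hA : IsUnit (opAbs A)) (hB : IsUnit (opAbs B))
    (r s : ℝ) (hr : 1 < r) (hrs : 1 / r + 1 / s = 1) (p : ℝ)
    (h : (r - 1) • ((A - B) * CFC.rpow (opAbs A) (p - 1))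
        = B * (CFC.rpow (opAbs A) (p - 1) - CFC.rpow (opAbs B) (p - 1))) :
    opAbs B ≤ CFC.sqrt ((1 / r) • (CFC.rpow (opAbs A) (1 - p) * CFC.rpow (opAbs B) (2 * p)
          * CFC.rpow (opAbs A) (1 - p)) + (1 / s) • opAbs A ^ 2) := by
  simp only [CFC.rpow_eq_pow] at h ⊢
  set a1 := opAbs A with ha1def
  set b1 := opAbs B with hb1def
  have ha1 : 0 ≤ a1 := CFC.sqrt_nonneg _
  have hb1 : 0 ≤ b1 := CFC.sqrt_nonneg _
  have h0a : (0 : NNReal) ∉ spectrum NNReal a1 := by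
    rw [spectrum.zero_notMem_iff]; exact hA
  have h0b : (0 : NNReal) ∉ spectrum NNReal b1 := by
    rw [spectrum.zero_notMem_iff]; exact hB
  have hr0 : (0:ℝ) < r := lt_trans one_pos hr
  have htpos : (0:ℝ) < 1 / r := by positivity
  have ht1 : 1 / r < 1 := by rw [div_lt_one hr0]; exact hr
  have hs_eq : 1 / s = 1 - 1 / r := by linarith
  set X : H →L[ℂ] H := B * (b1 ^ (p - 1 : ℝ) * a1 ^ (1 - p : ℝ)) with hXdef
  have hinv : a1 ^ (p - 1 : ℝ) * a1 ^ (1 - p : ℝ) = 1 := by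
    rw [← CFC.rpow_add hA, show (p - 1 + (1 - p) : ℝ) = 0 by ring, CFC.rpow_zero a1 ha1]
  have hEq : (r - 1) • (A - B) = B - X := by
    have h2 := congrArg (fun T => T * a1 ^ (1 - p : ℝ)) h
    simp only [smul_mul_assoc, sub_mul, mul_assoc, hinv, mul_one] at h2
    simpa [hXdef, mul_sub, mul_one, mul_assoc] using h2
  have hstep1 : B = (1/r) • X + (1 - 1/r) • A := by
    have hX : X = r • B - (r - 1) • A := by
      have h3 : X = B - (r - 1) • (A - B) := by rw [hEq]; abel
      rw [h3]
      match_scalars <;> ring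
    rw [hX]
    match_scalars <;> field_simp <;> ring
  have hconv : star B * B ≤ (1/r) • (star X * X) + (1 - 1/r) • (star A * A) := by
    calc star B * B = star ((1/r) • X + (1 - 1/r) • A) * ((1/r) • X + (1 - 1/r) • A) := by
          rw [← hstep1]
      _ ≤ _ := myConvex_sq X A (1/r) htpos.le ht1.le
  have hBB : star B * B = b1 ^ (((2:ℕ) : ℝ)) := by
    rw [CFC.rpow_natCast b1 2 hb1]
    exact (CFC.sq_sqrt _ (star_mul_self_nonneg B)).symm
  have hXX : star X * X = a1 ^ (1 - p : ℝ) * b1 ^ (2 * p : ℝ) * a1 ^ (1 - p : ℝ) := by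
    have hsb : IsSelfAdjoint (b1 ^ (p - 1 : ℝ)) := .of_nonneg CFC.rpow_nonneg
    have hsa : IsSelfAdjoint (a1 ^ (1 - p : ℝ)) := .of_nonneg CFC.rpow_nonneg
    have hstar : star X = a1 ^ (1 - p : ℝ) * b1 ^ (p - 1 : ℝ) * star B := by
      rw [hXdef, star_mul, star_mul, hsb.star_eq, hsa.star_eq, mul_assoc]
    have hmid : b1 ^ (p - 1 : ℝ) * (b1 ^ (((2:ℕ) : ℝ)) * b1 ^ (p - 1 : ℝ))
        = b1 ^ (2 * p : ℝ) := by
      rw [← CFC.rpow_add hB, ← CFC.rpow_add hB]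
      congr 1
      push_cast
      ring
    calc star X * X
        = a1 ^ (1 - p : ℝ) * (b1 ^ (p - 1 : ℝ) * ((star B * B)
            * (b1 ^ (p - 1 : ℝ) * a1 ^ (1 - p : ℝ)))) := by
          rw [hstar, hXdef]; simp only [mul_assoc]
      _ = a1 ^ (1 - p : ℝ) * ((b1 ^ (p - 1 : ℝ) * (b1 ^ (((2:ℕ) : ℝ)) * b1 ^ (p - 1 : ℝ)))
            * a1 ^ (1 - p : ℝ)) := by
          rw [hBB]; simp only [mul_assoc]
      _ = a1 ^ (1 - p : ℝ) * b1 ^ (2 * p : ℝ) * a1 ^ (1 - p : ℝ) := by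
          rw [hmid, mul_assoc]
  have hAA : star A * A = a1 ^ 2 := (CFC.sq_sqrt _ (star_mul_self_nonneg A)).symm
  have hmain : star B * B ≤ (1 / r) • (a1 ^ (1 - p : ℝ) * b1 ^ (2 * p : ℝ)
      * a1 ^ (1 - p : ℝ)) + (1 / s) • a1 ^ 2 := by
    rw [hs_eq]
    calc star B * B ≤ (1/r) • (star X * X) + (1 - 1/r) • (star A * A) := hconv
      _ = _ := by rw [hXX, hAA]
  have hterm1 : 0 ≤ (1 / r) • (a1 ^ (1 - p : ℝ) * b1 ^ (2 * p : ℝ) * a1 ^ (1 - p : ℝ)) := by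
    refine mySmul_nonneg htpos.le ?_
    have hsa : IsSelfAdjoint (a1 ^ (1 - p : ℝ)) := .of_nonneg CFC.rpow_nonneg
    have h4 := star_left_conjugate_nonneg (CFC.rpow_nonneg (a := b1) (y := 2 * p)) (a1 ^ (1 - p : ℝ))
    rwa [hsa.star_eq] at h4
  have hterm2 : 0 ≤ (1 / s) • a1 ^ 2 := by
    refine mySmul_nonneg (by rw [hs_eq]; linarith) ?_
    rw [← hAA]
    exact star_mul_self_nonneg A
  have hterm2u : IsUnit ((1 / s) • a1 ^ 2) := by
    have hsne : (1/s : ℝ) ≠ 0 := by rw [hs_eq]; intro hcon; rw [sub_eq_zero] at hcon; linarith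
    rcases hA.pow 2 with ⟨u, hu⟩
    refine ⟨⟨(1/s) • (u : H →L[ℂ] H), (1/s)⁻¹ • ((u⁻¹ : (H →L[ℂ] H)ˣ) : H →L[ℂ] H), ?_, ?_⟩, by
      simp [hu]⟩
    · rw [smul_mul_assoc, mul_smul_comm, smul_smul, mul_inv_cancel₀ hsne, one_smul, u.mul_inv]
    · rw [smul_mul_assoc, mul_smul_comm, smul_smul, inv_mul_cancel₀ hsne, one_smul, u.inv_mul]
  have hrhs_nonneg : 0 ≤ (1 / r) • (a1 ^ (1 - p : ℝ) * b1 ^ (2 * p : ℝ)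
      * a1 ^ (1 - p : ℝ)) + (1 / s) • a1 ^ 2 := add_nonneg hterm1 hterm2
  have hrhs_unit : IsUnit ((1 / r) • (a1 ^ (1 - p : ℝ) * b1 ^ (2 * p : ℝ)
      * a1 ^ (1 - p : ℝ)) + (1 / s) • a1 ^ 2) :=
    CStarAlgebra.isUnit_of_le _ (le_add_of_nonneg_left hterm1)
      (IsStrictlyPositive.iff_of_unital.mpr ⟨hterm2, hterm2u⟩)
  show CFC.sqrt (star B * B) ≤ _
  exact mySqrt_le_sqrt (star_mul_self_nonneg B) hrhs_nonneg hrhs_unit hmain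
end

section
/- Let S and T be positive bounded operators on a Hilbert space satisfying ST + TS = rS² for some real number r. Then: (i) if r < 0, then S = 0; (ii) if r ≥ 0, then S and T commute. -/
variable {H : Type*} [NormedAddCommGroup H] [InnerProductSpace ℂ H] [CompleteSpace H]

/-- If `b` commutes with a selfadjoint `a`, it commutes with any `cfc f a`. -/
lemma commute_cfc' (a b : H →L[ℂ] H) (ha : IsSelfAdjoint a) (hab : Commute b a)
    (f : ℝ → ℝ) : Commute b (cfc f a) := by
  by_cases hf : ContinuousOn f (spectrum ℝ a)
  · have key : ∀ g : C(spectrum ℝ a, ℝ), Commute b (cfcHom ha g) := by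
      have : CompactSpace (spectrum ℝ a) :=
        ContinuousFunctionalCalculus.compactSpace_spectrum a
      intro g
      induction g using ContinuousMap.induction_on_of_compact with
      | const r =>
        have : (ContinuousMap.const (spectrum ℝ a) r)
            = algebraMap ℝ C(spectrum ℝ a, ℝ) r := rfl
        rw [this, AlgHomClass.commutes]
        exact (Algebra.commutes r b).symm
      | id => rw [cfcHom_id ha]; exact hab
      | star_id =>
        have : star ((ContinuousMap.id ℝ).restrict (spectrum ℝ a))
            = (ContinuousMap.id ℝ).restrict (spectrum ℝ a) := by ext x; simp
        rw [this, cfcHom_id ha]; exact hab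
      | add f g hf hg => rw [map_add]; exact hf.add_right hg
      | mul f g hf hg => rw [map_mul]; exact hf.mul_right hg
      | frequently g hg =>
        have hcl : IsClosed {g : C(spectrum ℝ a, ℝ) | Commute b (cfcHom ha g)} :=
          isClosed_eq ((continuous_mul_left b).comp (cfcHom_continuous ha))
            ((continuous_mul_right b).comp (cfcHom_continuous ha))
        exact hcl.closure_subset (mem_closure_iff_frequently.mpr hg)
    rw [cfc_apply f a ha hf]; exact key _
  · rw [cfc_apply_of_not_continuousOn a hf]; exact Commute.zero_right b

/-- For a nonneg operator, `cfc Real.sqrt` is a nonneg square root of it. -/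
lemma cfc_sqrt_eq (a : H →L[ℂ] H) (ha : 0 ≤ a * a) (b : H →L[ℂ] H) (hb : 0 ≤ b)
    (hba : b * b = a * a) : cfc Real.sqrt (a * a) = b := by
  have hnn : (0 : H →L[ℂ] H) ≤ cfc Real.sqrt (a * a) :=
    cfc_nonneg (fun x _ => Real.sqrt_nonneg x)
  have hmul : cfc Real.sqrt (a * a) * cfc Real.sqrt (a * a) = a * a := by
    rw [← cfc_mul _ _ (a * a)
      (Real.continuous_sqrt.continuousOn) (Real.continuous_sqrt.continuousOn)]
    have : cfc (fun x => Real.sqrt x * Real.sqrt x) (a * a) = cfc id (a * a) :=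
      cfc_congr fun x hx => Real.mul_self_sqrt (spectrum_nonneg_of_nonneg ha hx)
    rw [this]
    exact cfc_id ℝ (a * a)
  exact (CFC.sqrt_unique hmul hnn).symm.trans (CFC.sqrt_unique hba hb)

theorem positive_anticommutator (S T : H →L[ℂ] H)
    (hS : 0 ≤ S) (hT : 0 ≤ T) (r : ℝ) (h : S * T + T * S = r • S ^ 2) :
    (r < 0 → S = 0) ∧ (0 ≤ r → Commute S T) := by
  have hSsa : IsSelfAdjoint S := hS.isSelfAdjoint
  have hS2 : (0 : H →L[ℂ] H) ≤ S * S := by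
    simpa [hSsa.star_eq] using star_mul_self_nonneg S
  -- S² commutes with T
  have hA : S * S * T + S * (T * S) = r • (S * (S * S)) := by
    calc S * S * T + S * (T * S) = S * (S * T + T * S) := by noncomm_ring
    _ = S * (r • S ^ 2) := by rw [h]
    _ = r • (S * (S * S)) := by rw [mul_smul_comm]; noncomm_ring
  have hB : S * (T * S) + T * (S * S) = r • (S * (S * S)) := by
    calc S * (T * S) + T * (S * S) = (S * T + T * S) * S := by noncomm_ring
    _ = (r • S ^ 2) * S := by rw [h]
    _ = r • (S * (S * S)) := by rw [smul_mul_assoc]; noncomm_ring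
  have hc2 : Commute T (S * S) := by
    have : S * S * T = T * (S * S) := by
      have := hA.trans hB.symm
      rw [add_comm (S * (T * S))] at this
      exact add_right_cancel this
    exact this.symm
  -- hence T commutes with S
  have hcomm : Commute T S := by
    have hsq_sa : IsSelfAdjoint (S * S) := hS2.isSelfAdjoint
    have := commute_cfc' (S * S) T hsq_sa hc2 Real.sqrt
    rwa [cfc_sqrt_eq S hS2 S hS rfl] at this
  refine ⟨fun hr => ?_, fun _ => hcomm.symm⟩
  -- case r < 0
  have hST : S * T + S * T = r • (S * S) := by
    rw [hcomm.eq] at h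
    simpa [sq] using h
  -- S * T is nonneg: conjugate T by √S
  set R := cfc Real.sqrt S with hR
  have hRnn : (0 : H →L[ℂ] H) ≤ R := cfc_nonneg (fun x _ => Real.sqrt_nonneg x)
  have hRR : R * R = S := by
    rw [hR, ← cfc_mul _ _ S Real.continuous_sqrt.continuousOn Real.continuous_sqrt.continuousOn]
    have : cfc (fun x => Real.sqrt x * Real.sqrt x) S = cfc id S :=
      cfc_congr fun x hx => Real.mul_self_sqrt (spectrum_nonneg_of_nonneg hS hx)
    rw [this]
    exact cfc_id ℝ S
  have hST_nonneg : (0 : H →L[ℂ] H) ≤ S * T := by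
    have hRT : Commute T R := commute_cfc' S T hSsa hcomm Real.sqrt
    have : S * T = star R * T * R := by
      rw [hRnn.isSelfAdjoint.star_eq]
      calc S * T = R * R * T := by rw [hRR]
      _ = R * (R * T) := by noncomm_ring
      _ = R * (T * R) := by rw [hRT.eq]
      _ = R * T * R := by noncomm_ring
    rw [this]
    exact star_left_conjugate_nonneg hT R
  -- (-r) • (S * S) is nonneg
  have hc : Real.sqrt (-r) * Real.sqrt (-r) = -r := Real.mul_self_sqrt (by linarith)
  have hneg : (0 : H →L[ℂ] H) ≤ (-r) • (S * S) := by
    have : (-r) • (S * S) = star (Real.sqrt (-r) • S) * (Real.sqrt (-r) • S) := by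
      rw [star_smul, hSsa.star_eq, smul_mul_smul_comm, star_trivial, hc]
    rw [this]
    exact star_mul_self_nonneg _
  have hzero : r • (S * S) = 0 := by
    apply le_antisymm
    · rw [← neg_nonneg, ← neg_smul]; exact hneg
    · rw [← hST]; exact add_nonneg hST_nonneg hST_nonneg
  have hSS : S * S = 0 := by
    have := congrArg (fun x => r⁻¹ • x) hzero
    simpa [smul_smul, inv_mul_cancel₀ (ne_of_lt hr)] using this
  rw [← CStarRing.star_mul_self_eq_zero_iff S, hSsa.star_eq]
  exact hSS
end
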